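/- In the fluid model with early birds and T > Δ/μ, the socially optimal profile of a uniform density μ/Δ on [0, Δ/μ] yields social cost Δ²β/(2μ), and hence the price of anarchy equals exactly 2. -/

import Mathlib

/-- Fluid model with early birds and `T > Δ/μ`: the socially optimal uniform
profile `μ/Δ` on `[0, Δ/μ]` yields social cost `Δ²β/(2μ)`, and the price of
anarchy (equilibrium cost `Δ²β/μ` over optimal cost) equals exactly `2`. -/
theorem fluid_no_deadline_optimal_and_PoA (Δ μ α β : ℝ)
    (hΔ : 0 < Δ) (hμ : 0 < μ) (hα : 0 < α) (hβ : 0 < β) :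
    Δ * ∫ t in (0:ℝ)..(Δ / μ), β * t * (μ / Δ) = Δ ^ 2 * β / (2 * μ) ∧
    (Δ ^ 2 * β / μ) / (Δ ^ 2 * β / (2 * μ)) = 2 := by
  constructor
  · have : ∫ t in (0:ℝ)..(Δ / μ), β * t * (μ / Δ) =
        (β * (μ / Δ)) * ∫ t in (0:ℝ)..(Δ / μ), t := by
      rw [← intervalIntegral.integral_const_mul]
      congr 1; ext t; ring
    rw [this, integral_id]
    field_simp
    ring
  · rw [div_div_div_eq]
    field_simp
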